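/- arXiv:1307.0632 — 2 statements merged into one kernel-verified Lean document; each statement's English description precedes it below -/
import Mathlib

section
/- Let G₁, ..., G_k be independent uniformly random 2-element subsets of {1, ..., n}. Then the probability that G₁, ..., G_k form a circuit of depth k (i.e., each G_{i+1} intersects G₁ ∪ ... ∪ G_i for every i, in the greedy-parallelization sense where each successive gate starts a new level) is at most (2/n)^{k-1} · k!. -/
attribute [local instance] Classical.propDecidable

open Finset

namespace DepthChainAux

variable {n : ℕ}

abbrev Gate (n : ℕ) := {s : Finset (Fin n) // s.card = 2}

/-- Union of all gates. -/
def Un {k : ℕ} (g : Fin k → Gate n) : Finset (Fin n) :=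
  Finset.univ.biUnion (fun j => (g j).val)

/-- The chain condition. -/
abbrev Good {k : ℕ} (g : Fin k → Gate n) : Prop :=
  ∀ i : Fin k, 0 < i.val →
    ((g i).val ∩ (Finset.univ.filter (fun j : Fin k => j < i)).biUnion
        (fun j => (g j).val)).Nonempty

lemma filter_lt_last {k : ℕ} (g : Fin (k + 1) → Gate n) :
    (Finset.univ.filter (fun j : Fin (k + 1) => j < Fin.last k)).biUnion
        (fun j => (g j).val) = Un (Fin.init g) := by
  ext x
  simp only [Un, mem_biUnion, mem_filter, mem_univ, true_and, Fin.init]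
  constructor
  · rintro ⟨j, hj, hx⟩
    have hne : j ≠ Fin.last k := Fin.ne_of_lt hj
    exact ⟨j.castPred hne, by rwa [Fin.castSucc_castPred]⟩
  · rintro ⟨j, hx⟩
    exact ⟨j.castSucc, Fin.castSucc_lt_last j, hx⟩

lemma filter_lt_castSucc {k : ℕ} (g : Fin (k + 1) → Gate n) (i : Fin k) :
    (Finset.univ.filter (fun j : Fin (k + 1) => j < i.castSucc)).biUnion
        (fun j => (g j).val)
      = (Finset.univ.filter (fun j : Fin k => j < i)).biUnion
          (fun j => (g j.castSucc).val) := by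
  ext x
  simp only [mem_biUnion, mem_filter, mem_univ, true_and]
  constructor
  · rintro ⟨j, hj, hx⟩
    have hne : j ≠ Fin.last k := Fin.ne_of_lt (hj.trans_le (Fin.le_last _))
    refine ⟨j.castPred hne, ?_, by rwa [Fin.castSucc_castPred]⟩
    have : (j.castPred hne).castSucc < i.castSucc := by rwa [Fin.castSucc_castPred]
    exact Fin.castSucc_lt_castSucc_iff.mp this
  · rintro ⟨j, hj, hx⟩
    exact ⟨j.castSucc, Fin.castSucc_lt_castSucc_iff.mpr hj, hx⟩

lemma Good.init {k : ℕ} {g : Fin (k + 1) → Gate n} (hg : Good g) :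
    Good (Fin.init g) := by
  intro i hi
  have h := hg i.castSucc (by simpa using hi)
  rw [filter_lt_castSucc] at h
  simpa [Fin.init] using h

lemma Good.last {k : ℕ} {g : Fin (k + 1) → Gate n} (hg : Good g) (hk : 0 < k) :
    ((g (Fin.last k)).val ∩ Un (Fin.init g)).Nonempty := by
  have h := hg (Fin.last k) (by simpa using hk)
  rwa [filter_lt_last] at h

lemma Un_succ {k : ℕ} (g : Fin (k + 1) → Gate n) :
    Un g = Un (Fin.init g) ∪ (g (Fin.last k)).val := by
  ext x
  simp only [Un, mem_biUnion, mem_univ, true_and, mem_union, Fin.init]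
  constructor
  · rintro ⟨j, hx⟩
    rcases Fin.eq_castSucc_or_eq_last j with ⟨j', rfl⟩ | rfl
    · exact Or.inl ⟨j', hx⟩
    · exact Or.inr hx
  · rintro (⟨j, hx⟩ | hx)
    · exact ⟨j.castSucc, hx⟩
    · exact ⟨Fin.last k, hx⟩

lemma card_Un_le {k : ℕ} (g : Fin (k + 1) → Gate n) (hg : Good g) :
    (Un g).card ≤ k + 2 := by
  induction k with
  | zero =>
      have h := Finset.card_biUnion_le (s := (Finset.univ : Finset (Fin 1)))
        (t := fun j => (g j).val)
      calc (Un g).card ≤ ∑ j : Fin 1, (g j).val.card := h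
        _ = 2 := by simp [(g 0).prop]
  | succ k ih =>
      obtain ⟨a, ha⟩ := hg.last (Nat.succ_pos k)
      rw [mem_inter] at ha
      have hU : Un g = Un (Fin.init g) ∪ ((g (Fin.last (k + 1))).val.erase a) := by
        rw [Un_succ]
        ext x
        simp only [mem_union, mem_erase]
        constructor
        · rintro (hx | hx)
          · exact Or.inl hx
          · by_cases hxa : x = a
            · exact Or.inl (hxa ▸ ha.2)
            · exact Or.inr ⟨hxa, hx⟩
        · rintro (hx | ⟨_, hx⟩)
          · exact Or.inl hx
          · exact Or.inr hx
      rw [hU]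
      have h1 : (Un (Fin.init g)).card ≤ k + 2 := ih (Fin.init g) hg.init
      have h2 : ((g (Fin.last (k + 1))).val.erase a).card ≤ 1 := by
        rw [Finset.card_erase_of_mem ha.1, (g (Fin.last (k + 1))).prop]
      calc (Un (Fin.init g) ∪ (g (Fin.last (k + 1))).val.erase a).card
          ≤ (Un (Fin.init g)).card + ((g (Fin.last (k + 1))).val.erase a).card :=
            Finset.card_union_le _ _
        _ ≤ (k + 2) + 1 := Nat.add_le_add h1 h2
        _ = k + 1 + 2 := by omega

lemma card_Un_le' : ∀ {k : ℕ} (g : Fin k → Gate n), Good g → (Un g).card ≤ k + 1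
  | 0, g, _ => by simp [Un]
  | (m + 1), g, hg => card_Un_le g hg

/-- Gates meeting a given set. -/
noncomputable def Meet (U : Finset (Fin n)) : Finset (Gate n) :=
  Finset.univ.filter (fun s : Gate n => ((s : Finset (Fin n)) ∩ U).Nonempty)

lemma card_Meet_le (U : Finset (Fin n)) : (Meet U).card ≤ U.card * (n - 1) := by
  classical
  have himg : (Meet U).card = ((Meet U).image (Subtype.val)).card :=
    (Finset.card_image_of_injective _ Subtype.val_injective).symm
  rw [himg]
  have hsurj : Set.SurjOn (fun p : (_ : Fin n) × Fin n => ({p.1, p.2} : Finset (Fin n)))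
      ↑(U.sigma (fun u => Finset.univ.erase u)) ↑((Meet U).image (Subtype.val)) := by
    intro t ht
    simp only [coe_image, Set.mem_image, mem_coe, Meet, mem_filter] at ht
    obtain ⟨s, ⟨-, hmeet⟩, rfl⟩ := ht
    obtain ⟨u, hu⟩ := hmeet
    rw [mem_inter] at hu
    have hcard : (s.val.erase u).card = 1 := by
      rw [Finset.card_erase_of_mem hu.1, s.prop]
    obtain ⟨v, hv⟩ := Finset.card_eq_one.mp hcard
    have hvu : v ≠ u := by
      have : v ∈ s.val.erase u := hv ▸ Finset.mem_singleton_self v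
      exact (Finset.mem_erase.mp this).1
    refine ⟨⟨u, v⟩, ?_, ?_⟩
    · simp only [Finset.coe_sigma, Set.mem_sigma_iff, mem_coe, mem_erase]
      exact ⟨hu.2, hvu, mem_univ v⟩
    · show ({u, v} : Finset (Fin n)) = s.val
      have : s.val = insert u (s.val.erase u) := (Finset.insert_erase hu.1).symm
      rw [this, hv]
  have hle := Finset.card_le_card_of_surjOn _ hsurj
  calc ((Meet U).image (Subtype.val)).card
      ≤ (U.sigma (fun u => Finset.univ.erase u)).card := hle
    _ = ∑ u ∈ U, (Finset.univ.erase u).card := Finset.card_sigma _ _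
    _ = ∑ _u ∈ U, (n - 1) := by
        refine Finset.sum_congr rfl (fun u _ => ?_)
        rw [Finset.card_erase_of_mem (mem_univ u), Finset.card_univ, Fintype.card_fin]
    _ = U.card * (n - 1) := by rw [Finset.sum_const, smul_eq_mul]

lemma step (k : ℕ) (hk : 1 ≤ k) :
    (Finset.univ.filter (fun g : Fin (k + 1) → Gate n => Good g)).card
      ≤ (Finset.univ.filter (fun g : Fin k → Gate n => Good g)).card
          * ((k + 1) * (n - 1)) := by
  classical
  set A := Finset.univ.filter (fun g : Fin k → Gate n => Good g) with hA
  have h1 : (Finset.univ.filter (fun g : Fin (k + 1) → Gate n => Good g)).card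
      ≤ (A.sigma (fun h => Meet (Un h))).card := by
    apply Finset.card_le_card_of_injOn
      (fun g => (⟨Fin.init g, g (Fin.last k)⟩ : (_ : Fin k → Gate n) × Gate n))
    · intro g hg
      simp only [Finset.mem_coe, Finset.mem_filter] at hg
      rw [Finset.mem_coe, Finset.mem_sigma]
      refine ⟨?_, ?_⟩
      · rw [hA, mem_filter]
        exact ⟨mem_univ _, hg.2.init⟩
      · rw [Meet, mem_filter]
        exact ⟨mem_univ _, hg.2.last hk⟩
    · intro g _ g' _ h
      obtain ⟨h1', h2'⟩ := Sigma.ext_iff.mp h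
      have h1 : Fin.init g = Fin.init g' := h1'
      have h2 : g (Fin.last k) = g' (Fin.last k) := eq_of_heq h2'
      funext i
      induction i using Fin.lastCases with
      | last => exact h2
      | cast i => exact congrFun h1 i
  have h2 : (A.sigma (fun h => Meet (Un h))).card ≤ A.card * ((k + 1) * (n - 1)) := by
    rw [Finset.card_sigma]
    calc ∑ h ∈ A, (Meet (Un h)).card
        ≤ ∑ h ∈ A, (k + 1) * (n - 1) := by
          refine Finset.sum_le_sum (fun h hmem => ?_)
          rw [hA, mem_filter] at hmem
          have hU : (Un h).card ≤ k + 1 := card_Un_le' h hmem.2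
          calc (Meet (Un h)).card ≤ (Un h).card * (n - 1) := card_Meet_le _
            _ ≤ (k + 1) * (n - 1) := Nat.mul_le_mul_right _ hU
      _ = A.card * ((k + 1) * (n - 1)) := by rw [Finset.sum_const, smul_eq_mul]
  exact h1.trans h2

lemma main_count (n k : ℕ) (hk : 1 ≤ k) :
    (Finset.univ.filter (fun g : Fin k → Gate n => Good g)).card
      ≤ n.choose 2 * ((n - 1) ^ (k - 1) * Nat.factorial k) := by
  induction k, hk using Nat.le_induction with
  | base =>
      calc (Finset.univ.filter (fun g : Fin 1 → Gate n => Good g)).card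
          ≤ (Finset.univ : Finset (Fin 1 → Gate n)).card := Finset.card_filter_le _ _
        _ = n.choose 2 := by
            rw [Finset.card_univ, Fintype.card_fun, Fintype.card_finset_len,
              Fintype.card_fin, Fintype.card_fin, pow_one]
        _ = n.choose 2 * ((n - 1) ^ 0 * Nat.factorial 1) := by simp
  | succ k hk ih =>
      calc (Finset.univ.filter (fun g : Fin (k + 1) → Gate n => Good g)).card
          ≤ (Finset.univ.filter (fun g : Fin k → Gate n => Good g)).card
              * ((k + 1) * (n - 1)) := step k hk
        _ ≤ (n.choose 2 * ((n - 1) ^ (k - 1) * Nat.factorial k)) * ((k + 1) * (n - 1)) :=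
            Nat.mul_le_mul_right _ ih
        _ = n.choose 2 * ((n - 1) ^ (k + 1 - 1) * Nat.factorial (k + 1)) := by
            obtain ⟨m, rfl⟩ : ∃ m, k = m + 1 := ⟨k - 1, (Nat.succ_pred_eq_of_pos hk).symm⟩
            simp only [Nat.add_sub_cancel]
            rw [pow_succ, Nat.factorial_succ (m + 1)]
            ring

end DepthChainAux

/-- `k` independent uniformly random 2-element subsets (gates) of `{1,...,n}` form a
circuit of depth `k` (every gate intersects the union of the previous ones) with
probability at most `(2/n)^(k-1) * k!`. -/
theorem depth_k_chain_prob
    (n k : ℕ) (hn : 2 ≤ n) (hk : 1 ≤ k) :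
    ((Finset.univ.filter (fun g : Fin k → {s : Finset (Fin n) // s.card = 2} =>
        ∀ i : Fin k, 0 < i.val →
          ((g i).val ∩ (Finset.univ.filter (fun j : Fin k => j < i)).biUnion
              (fun j => (g j).val)).Nonempty)).card : ℝ) /
      (Fintype.card (Fin k → {s : Finset (Fin n) // s.card = 2}) : ℝ)
    ≤ (2 / n) ^ (k - 1) * (Nat.factorial k) := by
  classical
  have hcount := DepthChainAux.main_count n k hk
  have hcard : Fintype.card (Fin k → {s : Finset (Fin n) // s.card = 2})
      = n.choose 2 ^ k := by
    rw [Fintype.card_fun, Fintype.card_finset_len, Fintype.card_fin, Fintype.card_fin]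
  have hfilt : (Finset.univ.filter (fun g : Fin k → {s : Finset (Fin n) // s.card = 2} =>
        ∀ i : Fin k, 0 < i.val →
          ((g i).val ∩ (Finset.univ.filter (fun j : Fin k => j < i)).biUnion
              (fun j => (g j).val)).Nonempty)).card
      = (Finset.univ.filter (fun g : Fin k → DepthChainAux.Gate n =>
          DepthChainAux.Good g)).card := by
    congr 1
  rw [hfilt, hcard]
  set Cr : ℝ := (n.choose 2 : ℝ) with hCrdef
  have hCr : Cr = (n : ℝ) * ((n : ℝ) - 1) / 2 := Nat.cast_choose_two ℝ n
  have hn1 : (1 : ℝ) ≤ (n : ℝ) := by exact_mod_cast le_trans one_le_two hn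
  have hnR : (0 : ℝ) < (n : ℝ) := by linarith
  have hCrpos : (0 : ℝ) < Cr := by
    rw [hCrdef]
    exact_mod_cast Nat.choose_pos (k := 2) (n := n) hn
  have hchain : ((Finset.univ.filter (fun g : Fin k → DepthChainAux.Gate n =>
      DepthChainAux.Good g)).card : ℝ)
      ≤ Cr * (((n : ℝ) - 1) ^ (k - 1) * (Nat.factorial k : ℝ)) := by
    have hc : ((n - 1 : ℕ) : ℝ) = (n : ℝ) - 1 := by
      rw [Nat.cast_sub (le_trans one_le_two hn), Nat.cast_one]
    calc ((Finset.univ.filter (fun g : Fin k → DepthChainAux.Gate n =>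
        DepthChainAux.Good g)).card : ℝ)
        ≤ ((n.choose 2 * ((n - 1) ^ (k - 1) * Nat.factorial k) : ℕ) : ℝ) := by
          exact_mod_cast hcount
      _ = Cr * (((n : ℝ) - 1) ^ (k - 1) * (Nat.factorial k : ℝ)) := by
          push_cast [hc]
          rw [hCrdef]
  have hdenpos : (0 : ℝ) < Cr ^ k := by positivity
  have hden : ((n.choose 2 ^ k : ℕ) : ℝ) = Cr ^ k := by push_cast; rw [hCrdef]
  rw [hden, div_le_iff₀ hdenpos]
  refine hchain.trans (le_of_eq ?_)
  have hid : (n : ℝ) - 1 = (2 / n) * Cr := by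
    rw [hCr]
    field_simp
  obtain ⟨m, rfl⟩ : ∃ m, k = m + 1 := ⟨k - 1, (Nat.succ_pred_eq_of_pos hk).symm⟩
  simp only [Nat.add_sub_cancel]
  rw [hid, mul_pow]
  ring
end

section
/- The Markov chain P on states {0, 1, ..., n} with transition probabilities P(ℓ, ℓ-1) = 2ℓ(ℓ-1)/(5n(n-1)), P(ℓ, ℓ+1) = 6ℓ(n-ℓ)/(5n(n-1)), P(ℓ, ℓ) = 1 - 2ℓ(3n - 2ℓ - 1)/(5n(n-1)), and all other transitions zero, has stationary distribution π(k) = 3^k · binom(n,k) / (4^n - 1) on states {1, ..., n}. -/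
/-- The weight chain `P` of random quantum circuits on states `{0,...,n}` with
`P(ℓ,ℓ-1) = 2ℓ(ℓ-1)/(5n(n-1))`, `P(ℓ,ℓ+1) = 6ℓ(n-ℓ)/(5n(n-1))` and the lazy
remainder on the diagonal has stationary distribution
`π(k) = 3^k C(n,k)/(4^n - 1)` on `{1,...,n}`. -/
theorem weight_chain_stationary
    (n : ℕ) (hn : 2 ≤ n) (P : ℕ → ℕ → ℝ)
    (hP : ∀ ℓ k : ℕ, P ℓ k =
      if k = ℓ then 1 - 2*(ℓ:ℝ)*(3*(n:ℝ) - 2*ℓ - 1)/(5*(n:ℝ)*((n:ℝ)-1))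
      else if k + 1 = ℓ then 2*(ℓ:ℝ)*((ℓ:ℝ)-1)/(5*(n:ℝ)*((n:ℝ)-1))
      else if k = ℓ + 1 then 6*(ℓ:ℝ)*((n:ℝ)-ℓ)/(5*(n:ℝ)*((n:ℝ)-1))
      else 0) :
    ∀ k ∈ Finset.Icc 1 n,
      ∑ ℓ ∈ Finset.Icc 1 n, ((3:ℝ)^ℓ * (n.choose ℓ) / (4^n - 1)) * P ℓ k
        = (3:ℝ)^k * (n.choose k) / (4^n - 1) := by
  intro k hk
  rw [Finset.mem_Icc] at hk
  obtain ⟨hk1, hkn⟩ := hk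
  have hn1 : (1:ℝ) < (n:ℝ) := by exact_mod_cast lt_of_lt_of_le one_lt_two hn
  have hD : (5*(n:ℝ)*((n:ℝ)-1)) ≠ 0 := by
    have : (0:ℝ) < 5*(n:ℝ)*((n:ℝ)-1) := by nlinarith
    linarith
  have hE : ((4:ℝ)^n - 1) ≠ 0 := by
    have : (1:ℝ) < 4^n := one_lt_pow₀ (by norm_num) (by omega)
    linarith
  have key : ∀ ℓ ∈ Finset.Icc 1 n, ℓ ∉ ({k-1, k, k+1} : Finset ℕ) →
      ((3:ℝ)^ℓ * (n.choose ℓ) / (4^n - 1)) * P ℓ k = 0 := by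
    intro ℓ hl hls
    simp only [Finset.mem_insert, Finset.mem_singleton] at hls
    push_neg at hls
    rw [Finset.mem_Icc] at hl
    rw [hP, if_neg (by omega), if_neg (by omega), if_neg (by omega)]
    ring
  have hsum := Finset.sum_subset
    (Finset.inter_subset_right (s₁ := ({k-1, k, k+1} : Finset ℕ)) (s₂ := Finset.Icc 1 n))
    (fun x hx hxs => key x hx (fun h => hxs (Finset.mem_inter.mpr ⟨h, hx⟩)))
  rw [← hsum]
  have h2 : ∀ j, j + 1 ≤ n → ((n.choose (j+1) : ℕ):ℝ) * (j+1) = (n.choose j) * ((n:ℝ) - j) := by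
    intro j hj
    have := Nat.choose_succ_right_eq n j
    have hc : ((n.choose (j+1) * (j+1) : ℕ) : ℝ) = ((n.choose j * (n - j) : ℕ) : ℝ) := by
      exact_mod_cast congrArg (Nat.cast : ℕ → ℝ) this
    push_cast [Nat.cast_sub (by omega : j ≤ n)] at hc
    linarith [hc]
  rcases eq_or_lt_of_le hk1 with hk1' | hk1'
  · -- k = 1
    subst hk1'
    have hset : ({1-1, 1, 1+1} : Finset ℕ) ∩ Finset.Icc 1 n = {1, 2} := by
      ext x
      simp only [Finset.mem_inter, Finset.mem_insert, Finset.mem_singleton, Finset.mem_Icc]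
      omega
    rw [hset]
    rw [Finset.sum_insert (by simp), Finset.sum_singleton]
    rw [hP, hP]
    rw [if_pos rfl, if_neg (by omega), if_pos rfl]
    have e1 : (n.choose 1 : ℝ) = n := by rw [Nat.choose_one_right]
    have e2 := h2 1 hn
    rw [e1] at e2
    push_cast at e2
    have hm1 : (n:ℝ) - 1 ≠ 0 := by linarith
    rw [Nat.choose_one_right]
    field_simp
    linear_combination 6*e2
  · rcases eq_or_lt_of_le hkn with hkn' | hkn'
    · -- k = n
      subst hkn'
      have hset : ({k-1, k, k+1} : Finset ℕ) ∩ Finset.Icc 1 k = {k-1, k} := by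
        ext x
        simp only [Finset.mem_inter, Finset.mem_insert, Finset.mem_singleton, Finset.mem_Icc]
        omega
      rw [hset]
      rw [Finset.sum_insert (by simp; omega), Finset.sum_singleton]
      rw [hP, hP]
      rw [if_neg (by omega), if_neg (by omega), if_pos (by omega), if_pos rfl]
      have e1 := h2 (k-1) (by omega)
      have hkk : k - 1 + 1 = k := by omega
      rw [hkk] at e1
      have hc1 : ((k-1 : ℕ):ℝ) = (k:ℝ) - 1 := by
        rw [Nat.cast_sub (by omega : 1 ≤ k)]; norm_num
      rw [hc1] at e1 ⊢
      have hp : (3:ℝ)^k = 3^(k-1)*3 := by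
        rw [← pow_succ]; congr 1; omega
      rw [hp]
      have hck : (k.choose k : ℝ) = 1 := by rw [Nat.choose_self]; norm_num
      rw [hck] at e1 ⊢
      have hca : ((k.choose (k-1) : ℕ):ℝ) = (k:ℝ) := by
        rw [Nat.choose_symm (by omega : 1 ≤ k), Nat.choose_one_right]
      rw [hca]
      field_simp
      ring
    · -- 1 < k < n
      have hset : ({k-1, k, k+1} : Finset ℕ) ∩ Finset.Icc 1 n = {k-1, k, k+1} := by
        ext x
        simp only [Finset.mem_inter, Finset.mem_insert, Finset.mem_singleton, Finset.mem_Icc]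
        omega
      rw [hset]
      rw [Finset.sum_insert (by simp only [Finset.mem_insert, Finset.mem_singleton]; omega),
        Finset.sum_insert (by simp only [Finset.mem_singleton]; omega), Finset.sum_singleton]
      rw [hP, hP, hP]
      rw [if_neg (by omega), if_neg (by omega), if_pos (by omega), if_pos rfl,
        if_neg (by omega), if_pos rfl]
      have e1 := h2 (k-1) (by omega)
      have hkk : k - 1 + 1 = k := by omega
      rw [hkk] at e1
      have e2 := h2 k (by omega)
      have hc1 : ((k-1 : ℕ):ℝ) = (k:ℝ) - 1 := by
        rw [Nat.cast_sub (by omega : 1 ≤ k)]; norm_num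
      rw [hc1] at e1 ⊢
      have hp1 : (3:ℝ)^k = 3^(k-1)*3 := by rw [← pow_succ]; congr 1; omega
      have hp2 : (3:ℝ)^(k+1) = 3^(k-1)*9 := by
        rw [show k+1 = (k-1)+2 by omega, pow_add]; ring
      rw [hp1, hp2]
      push_cast
      have hm1 : (n:ℝ) - 1 ≠ 0 := by linarith
      field_simp
      linear_combination (-6*((k:ℝ)-1))*e1 + 18*(k:ℝ)*e2
end
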